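/- Let $\alpha$ be a nonzero algebraic integer of degree $n \le 23$ with $s$ real conjugates $\alpha_1, \ldots, \alpha_s$ and $2t$ complex conjugates $\alpha_{s+1}, \ldots, \alpha_{s+t}, \overline{\alpha_{s+1}}, \ldots, \overline{\alpha_{s+t}}$ (so $n = s + 2t$). If $\sum_{i=1}^s \alpha_i^2 + \sum_{j=1}^t |\alpha_{s+j}|^2 < s + t$, then $\alpha$ is an algebraic unit. -/

import Mathlib

open Polynomial Finset

lemma small_size_key_nat : ∀ s < 24, ∀ t < 12, s + 2*t ≤ 23 →
    4^t * (s+t)^(s+2*t) ≤ 4 * (s+2*t)^(s+2*t) := by decide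

set_option maxHeartbeats 1000000 in
/-- Let `α` be a nonzero algebraic integer of degree `n = s + 2t ≤ 23` with `s` real
conjugates `a i` and `2t` complex conjugates `b j, conj (b j)`. If
`∑ aᵢ² + ∑ |bⱼ|² < s + t`, then `α` is an algebraic unit. -/
theorem small_size_implies_unit (s t : ℕ) (p : Polynomial ℤ) (hmonic : p.Monic)
    (hirr : Irreducible p) (hdeg : p.natDegree = s + 2 * t) (hn : s + 2 * t ≤ 23)
    (a : Fin s → ℝ) (b : Fin t → ℂ) (hb : ∀ j, (b j).im ≠ 0)
    (hfac : p.map (algebraMap ℤ ℂ) =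
      (∏ i, (X - C ((a i : ℂ)))) *
        ∏ j, ((X - C (b j)) * (X - C (starRingEnd ℂ (b j)))))
    (h0 : p.coeff 0 ≠ 0)
    (hsmall : ∑ i, (a i) ^ 2 + ∑ j, ‖b j‖ ^ 2 < (s : ℝ) + t) :
    p.coeff 0 = 1 ∨ p.coeff 0 = -1 := by
  by_contra hcon
  push_neg at hcon
  obtain ⟨hc1, hc2⟩ := hcon
  -- `n ≥ 1`
  have hSa : (0:ℝ) ≤ ∑ i, (a i) ^ 2 := Finset.sum_nonneg fun i _ => sq_nonneg _
  have hSb : (0:ℝ) ≤ ∑ j, ‖b j‖ ^ 2 := Finset.sum_nonneg fun j _ => sq_nonneg _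
  have hstR : (0:ℝ) < (s:ℝ) + t := lt_of_le_of_lt (by linarith) hsmall
  have hst : 1 ≤ s + t := by
    rcases Nat.eq_zero_or_pos (s + t) with h | h
    · obtain ⟨hs0, ht0⟩ := Nat.add_eq_zero.mp h
      subst hs0; subst ht0; norm_num at hstR
    · exact h
  have hn1 : 1 ≤ s + 2 * t := by omega
  have hnpos : (0:ℝ) < ((s + 2*t : ℕ) : ℝ) := by exact_mod_cast hn1
  have hnne : ((s + 2*t : ℕ) : ℝ) ≠ 0 := ne_of_gt hnpos
  -- the constant coefficient in terms of the roots
  have h1 := congrArg (eval 0) hfac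
  simp only [eval_map, eval₂_at_zero, eval_mul, eval_prod, eval_sub, eval_X, eval_C,
    zero_sub] at h1
  have h2 := congrArg (‖·‖) h1
  rw [norm_mul, norm_prod, norm_prod] at h2
  simp only [algebraMap_int_eq, eq_intCast] at h2
  have habs : |((p.coeff 0 : ℝ))| = (∏ i, |a i|) * ∏ j, ‖b j‖ ^ 2 := by
    rw [← Complex.norm_intCast, h2]
    congr 1
    · exact Finset.prod_congr rfl fun i _ => by
        rw [norm_neg, Complex.norm_real, Real.norm_eq_abs]
    · exact Finset.prod_congr rfl fun j _ => by
        rw [neg_mul_neg, Complex.mul_conj]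
        rw [Complex.norm_real, Real.norm_eq_abs, abs_of_nonneg (Complex.normSq_nonneg _), ← Complex.sq_norm]
  -- `|p.coeff 0| ≥ 2`
  have hcZ : 2 ≤ |p.coeff 0| := by
    rw [Int.abs_eq_natAbs]; omega
  have hcR : (2:ℝ) ≤ |((p.coeff 0 : ℝ))| := by
    rw [← Int.cast_abs]; exact_mod_cast hcZ
  have hcsq : (4:ℝ) ≤ ((p.coeff 0 : ℝ))^2 := by
    nlinarith [sq_abs ((p.coeff 0 : ℝ))]
  have hsq : (∏ i, a i ^ 2) * (∏ j, ‖b j‖ ^ 2)^2 = ((p.coeff 0 : ℝ))^2 := by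
    have h3 := congrArg (· ^ 2) habs
    rw [sq_abs, mul_pow, ← Finset.prod_pow] at h3
    rw [h3]
    congr 1
    exact Finset.prod_congr rfl fun i _ => (sq_abs (a i)).symm
  -- weighted AM-GM
  set n : ℕ := s + 2 * t with hn'
  set w : Fin s ⊕ Fin t → ℝ := Sum.elim (fun _ => 1/(n:ℝ)) (fun _ => 2/(n:ℝ)) with hw_def
  set z : Fin s ⊕ Fin t → ℝ :=
    Sum.elim (fun i => a i ^ 2) (fun j => ‖b j‖ ^ 2 / 2) with hz_def
  have hw : ∀ i ∈ Finset.univ, 0 ≤ w i := fun i _ => by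
    cases i <;> simp [hw_def] <;> positivity
  have hw' : ∑ i, w i = 1 := by
    simp only [hw_def, Fintype.sum_sum_type, Sum.elim_inl, Sum.elim_inr, Finset.sum_const,
      Finset.card_univ, Fintype.card_fin, nsmul_eq_mul]
    field_simp
    push_cast [hn']
    ring
  have hz : ∀ i ∈ Finset.univ, 0 ≤ z i := fun i _ => by
    cases i <;> simp [hz_def] <;> positivity
  have amgm := Real.geom_mean_le_arith_mean_weighted Finset.univ w z hw hw' hz
  -- the arithmetic mean
  have hAM : ∑ i, w i * z i = (∑ i, (a i) ^ 2 + ∑ j, ‖b j‖ ^ 2) / (n:ℝ) := by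
    simp only [hw_def, hz_def, Fintype.sum_sum_type, Sum.elim_inl, Sum.elim_inr]
    have e1 : ∀ i : Fin s, (1/(n:ℝ)) * (a i ^ 2) = a i ^ 2 / n := fun i => by ring
    have e2 : ∀ j : Fin t, (2/(n:ℝ)) * (‖b j‖ ^ 2 / 2) =
        ‖b j‖ ^ 2 / n := fun j => by ring
    simp only [e1, e2]
    rw [← Finset.sum_div, ← Finset.sum_div, ← add_div]
  -- the geometric mean
  have hGM : ∏ i, z i ^ w i = (((p.coeff 0 : ℝ))^2 / 4^t) ^ ((1:ℝ)/(n:ℝ)) := by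
    simp only [hz_def, hw_def, Fintype.prod_sum_type, Sum.elim_inl, Sum.elim_inr]
    rw [Real.finset_prod_rpow _ _ (fun i _ => sq_nonneg (a i)) _,
        Real.finset_prod_rpow _ _ (fun j _ => by positivity) _]
    rw [show (2:ℝ)/(n:ℝ) = ((2:ℕ):ℝ) * ((1:ℝ)/(n:ℝ)) by push_cast; ring,
        Real.rpow_mul (Finset.prod_nonneg fun j _ => by positivity), Real.rpow_natCast,
        ← Real.mul_rpow (Finset.prod_nonneg fun i _ => sq_nonneg _) (by positivity)]
    congr 1
    rw [Finset.prod_div_distrib, Finset.prod_const, Finset.card_univ, Fintype.card_fin,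
        div_pow, ← mul_div_assoc, hsq]
    congr 1
    rw [← pow_mul, mul_comm t 2, pow_mul]
    norm_num
  -- combine
  have hlow : ((4:ℝ) / 4^t) ^ ((1:ℝ)/(n:ℝ)) ≤ (((p.coeff 0 : ℝ))^2 / 4^t) ^ ((1:ℝ)/(n:ℝ)) :=
    Real.rpow_le_rpow (by positivity) (by gcongr) (by positivity)
  have hup : (∑ i, (a i) ^ 2 + ∑ j, ‖b j‖ ^ 2) / (n:ℝ) < ((s:ℝ) + t) / (n:ℝ) := by
    gcongr
  have hchain : ((4:ℝ)/4^t) ^ ((1:ℝ)/(n:ℝ)) < ((s:ℝ)+t)/(n:ℝ) := by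
    calc ((4:ℝ)/4^t) ^ ((1:ℝ)/(n:ℝ)) ≤ (((p.coeff 0 : ℝ))^2 / 4^t) ^ ((1:ℝ)/(n:ℝ)) := hlow
      _ = ∏ i, z i ^ w i := hGM.symm
      _ ≤ ∑ i, w i * z i := amgm
      _ = (∑ i, (a i) ^ 2 + ∑ j, ‖b j‖ ^ 2) / (n:ℝ) := hAM
      _ < ((s:ℝ) + t) / (n:ℝ) := hup
  have hL0 : (0:ℝ) ≤ (4:ℝ)/4^t := by positivity
  have hpow : (4:ℝ)/4^t < (((s:ℝ)+t)/(n:ℝ))^n := by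
    have h := pow_lt_pow_left₀ hchain (by positivity) (by omega : n ≠ 0)
    rwa [← Real.rpow_natCast (((4:ℝ)/4^t) ^ ((1:ℝ)/(n:ℝ))) n, ← Real.rpow_mul hL0,
        one_div, inv_mul_cancel₀ hnne, Real.rpow_one] at h
  rw [div_pow, div_lt_div_iff₀ (by positivity) (by positivity)] at hpow
  have hNat : 4 * n^n < (s+t)^n * 4^t := by exact_mod_cast hpow
  have hkey := small_size_key_nat s (by omega) t (by omega) (by omega)
  rw [mul_comm ((4:ℕ)^t) _] at hkey
  exact absurd hNat (not_lt.mpr hkey)
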